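/- Let h : P → Q be an exact and quasisaturated homomorphism of finitely generated, integral, sharp monoids. Then every monoid homomorphism P → ℕ factors through Q (i.e., there exists a homomorphism Q → ℕ whose composite with h is the given map). -/

import Mathlib

section Stmt14Aux

variable {G H' : Type*} [AddCommGroup G] [AddCommGroup H']

/-- The canonical homomorphism `(x, c) ↦ h x + ∑ i, c i • v i`. -/
def stmt14Phi {n : ℕ} (h : G →+ H') (v : Fin n → H') : (G × (Fin n → ℤ)) →+ H' :=
  AddMonoidHom.mk' (fun p => h p.1 + ∑ i, p.2 i • v i) (by
    intro a b
    simp only [Prod.fst_add, Prod.snd_add, map_add, Pi.add_apply, add_smul,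
      Finset.sum_add_distrib]
    abel)

@[simp] lemma stmt14Phi_apply {n : ℕ} (h : G →+ H') (v : Fin n → H')
    (p : G × (Fin n → ℤ)) :
    stmt14Phi h v p = h p.1 + ∑ i, p.2 i • v i := rfl

lemma stmt14Phi_succ {n : ℕ} (h : G →+ H') (v : Fin (n+1) → H')
    (w : G × (Fin (n+1) → ℤ)) :
    stmt14Phi h v w
      = stmt14Phi h (v ∘ Fin.castSucc) (w.1, w.2 ∘ Fin.castSucc)
        + (w.2 (Fin.last n)) • v (Fin.last n) := by
  simp only [stmt14Phi_apply, Fin.sum_univ_castSucc, Function.comp_apply]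
  abel

lemma stmt14Phi_snoc {n : ℕ} (h : G →+ H') (v : Fin (n+1) → H')
    (w : G × (Fin n → ℤ)) (m : ℤ) :
    stmt14Phi h v (w.1, Fin.snoc w.2 m)
      = stmt14Phi h (v ∘ Fin.castSucc) w + m • v (Fin.last n) := by
  rw [stmt14Phi_succ]
  have h1 : (Fin.snoc w.2 m : Fin (n+1) → ℤ) ∘ Fin.castSucc = w.2 := by
    funext i; simp [Fin.snoc_castSucc]
  have h2 : (Fin.snoc w.2 m : Fin (n+1) → ℤ) (Fin.last n) = m := Fin.snoc_last _ _
  simp only [h1]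
  simp [Fin.snoc_last]

/-- Every element of the closure of a finite set is an `ℕ`-combination. -/
lemma stmt14_rep (S : Finset H') {b : H'}
    (hb : b ∈ AddSubmonoid.closure (S : Set H')) :
    ∃ ν : ↥S → ℕ, b = ∑ s : ↥S, ν s • (s : H') := by
  classical
  induction hb using AddSubmonoid.closure_induction with
  | mem x hx =>
    refine ⟨fun s => if s = ⟨x, hx⟩ then 1 else 0, ?_⟩
    simp [ite_smul]
  | zero => exact ⟨0, by simp⟩
  | add x y hx hy ihx ihy =>
    obtain ⟨νx, hνx⟩ := ihx
    obtain ⟨νy, hνy⟩ := ihy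
    refine ⟨νx + νy, ?_⟩
    simp only [Pi.add_apply, add_nsmul, Finset.sum_add_distrib]
    rw [← hνx, ← hνy]

/-- Dickson-type boundedness: the values of `g` on `{w | Φ w + y₀ ∈ Q}` are
bounded below, provided `g ≥ 0` on `Φ⁻¹ Q` and `Q` is finitely generated. -/
lemma stmt14_bdd {W : Type*} [AddCommGroup W]
    (Q : AddSubmonoid H') (S : Finset H')
    (hSQ : AddSubmonoid.closure (S : Set H') = Q)
    (Phi : W →+ H') (g : W →+ ℤ)
    (hN : ∀ w, Phi w ∈ Q → 0 ≤ g w) (y₀ : H') :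
    ∃ M : ℤ, ∀ w, Phi w + y₀ ∈ Q → M ≤ g w := by
  classical
  by_contra hcon
  push_neg at hcon
  choose c hc1 hc2 using hcon
  let u : ℕ → W := fun i => i.rec (c 0) (fun _ w => c (g w))
  have hu1 : ∀ i, Phi (u i) + y₀ ∈ Q := by
    intro i
    cases i with
    | zero => exact hc1 0
    | succ j => exact hc1 _
  have hu2 : ∀ i, g (u (i+1)) < g (u i) := fun i => hc2 (g (u i))
  have hmono' : ∀ i d, g (u (i + d + 1)) < g (u i) := by
    intro i d
    induction d with
    | zero => simpa using hu2 i
    | succ d ih => exact lt_trans (hu2 (i + d + 1)) ih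
  have hmono : ∀ i j, i < j → g (u j) < g (u i) := by
    intro i j hij
    have := hmono' i (j - i - 1)
    have hj : i + (j - i - 1) + 1 = j := by omega
    rwa [hj] at this
  have hmem : ∀ i, Phi (u i) + y₀ ∈ AddSubmonoid.closure (S : Set H') := by
    intro i; rw [hSQ]; exact hu1 i
  choose ν hν using fun i => stmt14_rep S (hmem i)
  haveI : IsWellOrder ℕ (· < ·) := inferInstance
  obtain ⟨i, j, hij, hle⟩ :=
    (wellQuasiOrdered_le (α := ↥S → ℕ)) ν
  have hSsub : ∀ s : ↥S, (s : H') ∈ Q := by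
    intro s; rw [← hSQ]; exact AddSubmonoid.subset_closure s.2
  have hsum : Phi (u j) + y₀ = (Phi (u i) + y₀) + ∑ s : ↥S, (ν j s - ν i s) • (s : H') := by
    rw [hν i, hν j, ← Finset.sum_add_distrib]
    refine Finset.sum_congr rfl ?_
    intro s _
    rw [← add_nsmul]
    congr 1
    have hles : ν i s ≤ ν j s := hle s
    omega
  have hQsum : ∑ s : ↥S, (ν j s - ν i s) • (s : H') ∈ Q :=
    sum_mem (fun s _ => Q.nsmul_mem (hSsub s) _)
  have h3 : Phi (u j) = Phi (u i) + ∑ s : ↥S, (ν j s - ν i s) • (s : H') := by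
    apply add_right_cancel (b := y₀)
    rw [hsum]; abel
  have hdiff : Phi (u j - u i) ∈ Q := by
    rw [map_sub, h3, add_sub_cancel_left]
    exact hQsum
  have := hN _ hdiff
  rw [map_sub] at this
  have := hmono i j hij
  omega

/-- The key one-step extension lemma. -/
lemma stmt14_step {W : Type*} [AddCommGroup W]
    (Q : AddSubmonoid H') (S : Finset H')
    (hSQ : AddSubmonoid.closure (S : Set H') = Q)
    (Phi : W →+ H') (g : W →+ ℤ)
    (hN : ∀ w, Phi w ∈ Q → 0 ≤ g w)
    (hD : ∀ n : ℕ, 1 ≤ n → ∀ w (z : H'), Phi w + n • z ∈ Q →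
      ∃ w', Phi w' + z ∈ Q ∧ (n : ℤ) * g w' ≤ g w)
    (y₀ : H') (hy₀ : y₀ ∈ Q) :
    ∃ γ : ℤ,
      (∀ w (m : ℤ), Phi w + m • y₀ ∈ Q → 0 ≤ g w + m * γ) ∧
      (∀ n : ℕ, 1 ≤ n → ∀ w (m : ℤ) (z : H'), Phi w + m • y₀ + n • z ∈ Q →
        ∃ w', ∃ m' : ℤ, Phi w' + m' • y₀ + z ∈ Q ∧
          (n : ℤ) * (g w' + m' * γ) ≤ g w + m * γ) := by
  obtain ⟨M, hM⟩ := stmt14_bdd Q S hSQ Phi g hN y₀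
  obtain ⟨γ, ⟨w0, hw0Q, hw0γ⟩, hub⟩ :=
    Int.exists_greatest_of_bdd (P := fun zz => ∃ w, Phi w + y₀ ∈ Q ∧ zz = -g w)
      ⟨-M, by rintro zz ⟨w, hw, rfl⟩; have := hM w hw; omega⟩
      ⟨-g 0, 0, by simpa using hy₀, rfl⟩
  have hub' : ∀ w, Phi w + y₀ ∈ Q → -g w ≤ γ := fun w hw => hub _ ⟨w, hw, rfl⟩
  refine ⟨γ, ?_, ?_⟩
  · -- nonnegativity
    intro w m hmem
    rcases lt_trichotomy m 0 with hm | hm | hm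
    · set l : ℕ := (-m).toNat with hldef
      have hl' : (l : ℤ) = -m := Int.toNat_of_nonneg (by omega)
      have key : Phi w + m • y₀ + l • (Phi w0 + y₀) = Phi (w + l • w0) := by
        rw [map_add, map_nsmul, smul_add, ← natCast_zsmul y₀ l, hl', neg_zsmul]
        abel
      have h0 : 0 ≤ g (w + l • w0) :=
        hN _ (key ▸ add_mem hmem (Q.nsmul_mem hw0Q l))
      have hg : g (w + l • w0) = g w + (l : ℤ) * g w0 := by
        rw [map_add, map_nsmul, nsmul_eq_mul]
      have hmγ : m * γ = (l : ℤ) * g w0 := by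
        rw [hw0γ, hl']; ring
      omega
    · subst hm
      simp only [zero_smul, add_zero] at hmem
      simpa using hN w hmem
    · set nn : ℕ := m.toNat with hnndef
      have hnn1 : 1 ≤ nn := by omega
      have hnnm : (nn : ℤ) = m := Int.toNat_of_nonneg (le_of_lt hm)
      have hmem' : Phi w + nn • y₀ ∈ Q := by
        rwa [← natCast_zsmul y₀ nn, hnnm]
      obtain ⟨w', hw'Q, hw'le⟩ := hD nn hnn1 w y₀ hmem'
      rw [hnnm] at hw'le
      have h1 := hub' w' hw'Q
      nlinarith [mul_le_mul_of_nonneg_left h1 (le_of_lt hm)]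
  · -- domination
    intro n hn w m z hmem
    set a : ℤ := m / (n : ℤ) with hadef
    set r : ℤ := m % (n : ℤ) with hrdef
    have hnpos : (0 : ℤ) < (n : ℤ) := by exact_mod_cast hn
    have hr0 : 0 ≤ r := Int.emod_nonneg m (by omega)
    have hrn : r < (n : ℤ) := Int.emod_lt_of_pos m hnpos
    have hm_eq : (n : ℤ) * a + r = m := Int.mul_ediv_add_emod m (n : ℤ)
    by_cases hr : r = 0
    · have hna : (n : ℤ) * a = m := by omega
      have e : Phi w + (n : ℕ) • (a • y₀ + z) = Phi w + m • y₀ + n • z := by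
        rw [smul_add, ← natCast_zsmul (a • y₀) n, smul_smul, hna]
        abel
      have hmem' : Phi w + (n : ℕ) • (a • y₀ + z) ∈ Q := by rw [e]; exact hmem
      obtain ⟨w', hw'Q, hw'le⟩ := hD n hn w _ hmem'
      refine ⟨w', a, by rwa [← add_assoc] at hw'Q, ?_⟩
      calc (n : ℤ) * (g w' + a * γ) = (n : ℤ) * g w' + ((n : ℤ) * a) * γ := by ring
        _ = (n : ℤ) * g w' + m * γ := by rw [hna]
        _ ≤ g w + m * γ := by linarith
    · have hrpos : 0 < r := lt_of_le_of_ne hr0 (Ne.symm hr)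
      set k : ℕ := ((n : ℤ) - r).toNat with hkdef
      have hk' : (k : ℤ) = (n : ℤ) - r := Int.toNat_of_nonneg (by omega)
      have base : (Phi w + m • y₀ + n • z) + k • (Phi w0 + y₀) ∈ Q :=
        add_mem hmem (Q.nsmul_mem hw0Q k)
      have hcoe : (n : ℤ) * (a + 1) = m + ((n : ℤ) - r) := by
        have : (n : ℤ) * (a + 1) = (n : ℤ) * a + (n : ℤ) := by ring
        omega
      have e : (Phi w + m • y₀ + n • z) + k • (Phi w0 + y₀)
          = Phi (w + k • w0) + (n : ℕ) • ((a + 1) • y₀ + z) := by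
        rw [map_add, map_nsmul, smul_add (k) (Phi w0) y₀,
          smul_add (n) ((a+1) • y₀) z, ← natCast_zsmul ((a+1) • y₀) n, smul_smul,
          ← natCast_zsmul y₀ k, hk', hcoe, add_zsmul]
        abel
      have hmem' : Phi (w + k • w0) + (n : ℕ) • ((a + 1) • y₀ + z) ∈ Q := by
        rw [← e]; exact base
      obtain ⟨w', hw'Q, hw'le⟩ := hD n hn _ _ hmem'
      refine ⟨w', a + 1, by rwa [← add_assoc] at hw'Q, ?_⟩
      have hg : g (w + k • w0) = g w + (k : ℤ) * g w0 := by
        rw [map_add, map_nsmul, nsmul_eq_mul]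
      rw [hg] at hw'le
      have hγ : (k : ℤ) * g w0 = -((k : ℤ) * γ) := by rw [hw0γ]; ring
      calc (n : ℤ) * (g w' + (a + 1) * γ)
          = (n : ℤ) * g w' + ((n : ℤ) * (a + 1)) * γ := by ring
        _ ≤ (g w + (k : ℤ) * g w0) + ((n : ℤ) * (a + 1)) * γ := by linarith
        _ = g w + (((n : ℤ) * (a + 1)) - (k : ℤ)) * γ := by rw [hγ]; ring
        _ = g w + m * γ := by rw [hk', hcoe]; ring_nf

/-- Main induction: extend the functional over finitely many generators of `Q`. -/
lemma stmt14_ind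
    (P : AddSubmonoid G) (Q : AddSubmonoid H') (h : G →+ H') (f : G →+ ℤ)
    (S : Finset H') (hSQ : AddSubmonoid.closure (S : Set H') = Q)
    (hf : ∀ a ∈ P, 0 ≤ f a)
    (hexact : ∀ x : G, h x ∈ Q → x ∈ P)
    (hqs : ∀ (n : ℕ), 1 ≤ n → ∀ (x : G) (y : H'), h x + n • y ∈ Q →
      ∃ p ∈ P, ∃ q ∈ Q, ∃ t : G, x = p + n • t ∧ y = q - h t) :
    ∀ (n : ℕ) (v : Fin n → H'), (∀ i, v i ∈ Q) →
      ∃ γ : Fin n → ℤ,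
        (∀ w, stmt14Phi h v w ∈ Q → 0 ≤ stmt14Phi f γ w) ∧
        (∀ k : ℕ, 1 ≤ k → ∀ w (z : H'), stmt14Phi h v w + k • z ∈ Q →
          ∃ w', stmt14Phi h v w' + z ∈ Q ∧
            (k : ℤ) * stmt14Phi f γ w' ≤ stmt14Phi f γ w) := by
  intro n
  induction n with
  | zero =>
    intro v _
    refine ⟨0, ?_, ?_⟩
    · intro w hw
      have h1 : stmt14Phi h v w = h w.1 := by simp
      have h2 : stmt14Phi f 0 w = f w.1 := by simp
      rw [h2]
      exact hf _ (hexact _ (h1 ▸ hw))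
    · intro k hk w z hmem
      have h1 : stmt14Phi h v w = h w.1 := by simp
      rw [h1] at hmem
      obtain ⟨p, hp, q, hq, t, hxt, hzt⟩ := hqs k hk w.1 z hmem
      refine ⟨(t, 0), ?_, ?_⟩
      · have h3 : stmt14Phi h v (t, (0 : Fin 0 → ℤ)) = h t := by simp
        rw [h3, hzt]
        simpa using hq
      · have h4 : stmt14Phi f 0 (t, (0 : Fin 0 → ℤ)) = f t := by simp
        have h5 : stmt14Phi f 0 w = f w.1 := by simp
        rw [h4, h5, hxt]
        have h6 : f (p + k • t) = f p + (k : ℤ) * f t := by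
          rw [map_add, map_nsmul, nsmul_eq_mul]
        rw [h6]
        have := hf p hp
        linarith
  | succ n ih =>
    intro v hv
    obtain ⟨γ', hN', hD'⟩ := ih (v ∘ Fin.castSucc) (fun i => hv _)
    obtain ⟨γ₀, hsN, hsD⟩ := stmt14_step Q S hSQ
      (stmt14Phi h (v ∘ Fin.castSucc)) (stmt14Phi f γ') hN' hD'
      (v (Fin.last n)) (hv _)
    have hcs : (Fin.snoc γ' γ₀ : Fin (n+1) → ℤ) ∘ Fin.castSucc = γ' := by
      funext i; simp
    have hlast : (Fin.snoc γ' γ₀ : Fin (n+1) → ℤ) (Fin.last n) = γ₀ :=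
      Fin.snoc_last _ _
    have eg : ∀ w : G × (Fin (n+1) → ℤ),
        stmt14Phi f (Fin.snoc γ' γ₀) w
          = stmt14Phi f γ' (w.1, w.2 ∘ Fin.castSucc) + (w.2 (Fin.last n)) * γ₀ := by
      intro w
      rw [stmt14Phi_succ, hcs, hlast, smul_eq_mul]
    have egsnoc : ∀ (w : G × (Fin n → ℤ)) (m : ℤ),
        stmt14Phi f (Fin.snoc γ' γ₀) (w.1, Fin.snoc w.2 m)
          = stmt14Phi f γ' w + m * γ₀ := by
      intro w m
      rw [stmt14Phi_snoc, hcs, hlast, smul_eq_mul]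
    refine ⟨Fin.snoc γ' γ₀, ?_, ?_⟩
    · intro w hw
      rw [stmt14Phi_succ h v w] at hw
      have := hsN (w.1, w.2 ∘ Fin.castSucc) (w.2 (Fin.last n)) hw
      rw [eg w]
      exact this
    · intro k hk w z hmem
      rw [stmt14Phi_succ h v w] at hmem
      obtain ⟨w', m', hw'Q, hw'le⟩ :=
        hsD k hk (w.1, w.2 ∘ Fin.castSucc) (w.2 (Fin.last n)) z hmem
      refine ⟨(w'.1, Fin.snoc w'.2 m'), ?_, ?_⟩
      · rw [stmt14Phi_snoc]
        exact hw'Q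
      · rw [egsnoc w' m', eg w]
        exact hw'le

end Stmt14Aux

/-- Let `h : P → Q` be an exact and quasisaturated homomorphism
of finitely generated, integral, sharp monoids (modeled as submonoids of their
Grothendieck groups `G = P^gp`, `H = Q^gp`).  Then every monoid homomorphism
`P → ℕ` (modeled as `f : G →+ ℤ` nonnegative on `P`) factors through `Q`.

Quasisaturation is encoded concretely: for every `n ≥ 1`, the canonical map
`h' : Q'ₙ → Q` from the integral pushout `Q'ₙ` of `h` along `[n] : P → P` is
exact; identifying `(Q'ₙ)^gp = (G ⊕ H)/⟨(n•x, -h x)⟩` and `h'(x, y) = h x + n•y`,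
this means: whenever `h x + n • y ∈ Q`, the class of `(x, y)` lies in the
submonoid generated by `P` and `Q`, i.e. there are `p ∈ P`, `q ∈ Q`, `t : G`
with `x = p + n • t` and `y = q - h t`. -/
theorem stmt_14 {G H : Type*} [AddCommGroup G] [AddCommGroup H]
    (P : AddSubmonoid G) (Q : AddSubmonoid H) (h : G →+ H)
    (hPQ : ∀ x ∈ P, h x ∈ Q)
    (hPfg : P.FG) (hQfg : Q.FG)
    (hGgen : ∀ x : G, ∃ a ∈ P, ∃ b ∈ P, x = a - b)
    (hHgen : ∀ y : H, ∃ a ∈ Q, ∃ b ∈ Q, y = a - b)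
    (hPsharp : ∀ u ∈ P, -u ∈ P → u = 0) (hQsharp : ∀ u ∈ Q, -u ∈ Q → u = 0)
    (hexact : ∀ x : G, h x ∈ Q → x ∈ P)
    (hqs : ∀ (n : ℕ), 1 ≤ n → ∀ (x : G) (y : H), h x + n • y ∈ Q →
      ∃ p ∈ P, ∃ q ∈ Q, ∃ t : G, x = p + n • t ∧ y = q - h t) :
    ∀ f : G →+ ℤ, (∀ a ∈ P, 0 ≤ f a) →
      ∃ g : H →+ ℤ, (∀ b ∈ Q, 0 ≤ g b) ∧ g.comp h = f := by
  classical
  intro f hf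
  obtain ⟨S, hSQ⟩ := hQfg
  set nn := S.card with hnn
  set v : Fin nn → H := fun i => ((S.equivFin.symm i : ↥S) : H) with hv_def
  have hv : ∀ i, v i ∈ Q := by
    intro i
    rw [← hSQ]
    exact AddSubmonoid.subset_closure (S.equivFin.symm i).2
  obtain ⟨γ, hN, hD⟩ := stmt14_ind P Q h f S hSQ hf hexact hqs nn v hv
  -- surjectivity of stmt14Phi h v
  have hS : ∀ s ∈ S, ∃ w, stmt14Phi h v w = s := by
    intro s hs
    refine ⟨(0, Pi.single (S.equivFin ⟨s, hs⟩) 1), ?_⟩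
    have : v (S.equivFin ⟨s, hs⟩) = s := by
      rw [hv_def]; simp
    rw [stmt14Phi_apply]
    rw [Finset.sum_eq_single (S.equivFin ⟨s, hs⟩)]
    · simp [this]
    · intro b _ hb
      simp [Pi.single_apply, hb]
    · intro hb
      exact absurd (Finset.mem_univ _) hb
  have hrange : ∀ y : H, ∃ w, stmt14Phi h v w = y := by
    have hQr : ∀ c ∈ Q, ∃ w, stmt14Phi h v w = c := by
      intro c hc
      have hc' : c ∈ AddSubmonoid.closure (S : Set H) := by rw [hSQ]; exact hc
      have hle : AddSubmonoid.closure (S : Set H) ≤ AddMonoidHom.mrange (stmt14Phi h v) := by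
        rw [AddSubmonoid.closure_le]
        intro s hs
        obtain ⟨w, hw⟩ := hS s hs
        exact ⟨w, hw⟩
      exact hle hc'
    intro y
    obtain ⟨a, ha, b, hb, rfl⟩ := hHgen y
    obtain ⟨wa, hwa⟩ := hQr a ha
    obtain ⟨wb, hwb⟩ := hQr b hb
    exact ⟨wa - wb, by rw [map_sub, hwa, hwb]⟩
  have hzero : ∀ u, stmt14Phi h v u = 0 → stmt14Phi f γ u = 0 := by
    intro u hu
    have h1 := hN u (by rw [hu]; exact Q.zero_mem)
    have h2 := hN (-u) (by rw [map_neg, hu, neg_zero]; exact Q.zero_mem)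
    rw [map_neg] at h2
    omega
  have hwd : ∀ u u', stmt14Phi h v u = stmt14Phi h v u' →
      stmt14Phi f γ u = stmt14Phi f γ u' := by
    intro u u' he
    have := hzero (u - u') (by rw [map_sub, he, sub_self])
    rw [map_sub] at this
    omega
  choose σ hσ using hrange
  refine ⟨AddMonoidHom.mk' (fun y => stmt14Phi f γ (σ y)) ?_, ?_, ?_⟩
  · intro y z
    have h7 : stmt14Phi f γ (σ (y + z)) = stmt14Phi f γ (σ y + σ z) :=
      hwd _ _ (by rw [map_add, hσ, hσ, hσ])
    show stmt14Phi f γ (σ (y + z))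
      = stmt14Phi f γ (σ y) + stmt14Phi f γ (σ z)
    rw [h7, map_add]
  · intro b hb
    exact hN (σ b) (by rw [hσ]; exact hb)
  · ext x
    have h1 : stmt14Phi f γ (σ (h x)) = stmt14Phi f γ (x, 0) :=
      hwd _ _ (by rw [hσ]; simp)
    show stmt14Phi f γ (σ (h x)) = f x
    rw [h1]
    simp
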